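/- arXiv:2010.02045 — 7 statements merged into one kernel-verified Lean document; each statement's English description precedes it below -/
import Mathlib

section
/- Let O ⊂ ℝⁿ be a compact convex body containing 0 in its interior, and let O° be its polar body. For a face F of O define F̂ = {y ∈ O° : ∀ x ∈ F, ⟨x,y⟩ = 1}. Then F̂ is an exposed face of O°, and the map F ↦ F̂ restricts to an inclusion-reversing bijection between the exposed faces of O and the exposed faces of O°, with inverse G ↦ Ĝ. -/
open RealInnerProductSpace

/-- The "hat" operation sending a face `F` of a body with polar `P` to
`F̂ = {y ∈ P : ∀ x ∈ F, ⟪x, y⟫ = 1}`. -/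
noncomputable def faceHat {n : ℕ} (P F : Set (EuclideanSpace ℝ (Fin n))) :
    Set (EuclideanSpace ℝ (Fin n)) :=
  {y ∈ P | ∀ x ∈ F, ⟪x, y⟫ = 1}

section Aux

variable {n : ℕ}

local notation "E" => EuclideanSpace ℝ (Fin n)

/-- The polar body. -/
def polarSet (O : Set (EuclideanSpace ℝ (Fin n))) : Set (EuclideanSpace ℝ (Fin n)) :=
  {y | ∀ x ∈ O, ⟪x, y⟫ ≤ 1}

lemma polarSet_convex (O : Set E) : Convex ℝ (polarSet O) := by
  intro y hy z hz a b ha hb hab x hx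
  have hyx := hy x hx
  have hzx := hz x hx
  have : ⟪x, a • y + b • z⟫ = a * ⟪x, y⟫ + b * ⟪x, z⟫ := by
    rw [inner_add_right, real_inner_smul_right, real_inner_smul_right]
  rw [this]
  nlinarith

lemma polarSet_isClosed (O : Set E) : IsClosed (polarSet O) := by
  have : polarSet O = ⋂ x ∈ O, {y : E | ⟪x, y⟫ ≤ 1} := by
    ext y; simp [polarSet]
  rw [this]
  refine isClosed_biInter fun x _ => ?_
  have : {y : E | ⟪x, y⟫ ≤ 1} = (innerSL ℝ x) ⁻¹' Set.Iic 1 := rfl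
  rw [this]
  exact IsClosed.preimage (innerSL ℝ x).continuous isClosed_Iic

lemma zero_mem_polarSet (O : Set E) : (0 : E) ∈ polarSet O := by
  intro x _; simp

lemma zero_mem_interior_polarSet {O : Set E} (hO : IsCompact O) :
    (0 : E) ∈ interior (polarSet O) := by
  obtain ⟨R, hR⟩ := (Metric.isBounded_iff_subset_closedBall 0).mp hO.isBounded
  set R' := max R 1 with hR'
  have hR'pos : (0 : ℝ) < R' := lt_of_lt_of_le one_pos (le_max_right _ _)
  have hsub : Metric.closedBall (0 : E) R'⁻¹ ⊆ polarSet O := by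
    intro y hy x hx
    have hx' : ‖x‖ ≤ R' := by
      have := hR hx
      simp only [Metric.mem_closedBall, dist_zero_right] at this
      exact this.trans (le_max_left _ _)
    have hy' : ‖y‖ ≤ R'⁻¹ := by
      simpa [dist_zero_right] using hy
    calc ⟪x, y⟫ ≤ ‖x‖ * ‖y‖ := real_inner_le_norm x y
      _ ≤ R' * R'⁻¹ := by
          apply mul_le_mul hx' hy' (norm_nonneg _) (le_of_lt hR'pos)
      _ = 1 := mul_inv_cancel₀ (ne_of_gt hR'pos)
  exact mem_interior.mpr ⟨Metric.ball 0 R'⁻¹,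
    (Metric.ball_subset_closedBall).trans hsub, Metric.isOpen_ball,
    Metric.mem_ball_self (by positivity)⟩

lemma polarSet_isCompact {O : Set E} (hO0 : (0 : E) ∈ interior O) :
    IsCompact (polarSet O) := by
  obtain ⟨ε, hε, hball⟩ := Metric.mem_nhds_iff.mp (mem_interior_iff_mem_nhds.mp hO0)
  have hsub : polarSet O ⊆ Metric.closedBall (0 : E) (2 / ε) := by
    intro y hy
    simp only [Metric.mem_closedBall, dist_zero_right]
    by_cases hy0 : y = 0
    · simp [hy0]; positivity
    · have hny : (0 : ℝ) < ‖y‖ := norm_pos_iff.mpr hy0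
      set x : E := (ε / 2) • (‖y‖⁻¹ • y) with hx
      have hnx : ‖x‖ = ε / 2 := by
        rw [hx, norm_smul, norm_smul, Real.norm_eq_abs, Real.norm_eq_abs,
          abs_of_pos (by positivity : (0:ℝ) < ε / 2), abs_of_pos (inv_pos.mpr hny),
          inv_mul_cancel₀ (ne_of_gt hny), mul_one]
      have hxball : x ∈ Metric.ball (0 : E) ε := by
        simp only [Metric.mem_ball, dist_zero_right, hnx]
        linarith
      have hxy : ⟪x, y⟫ = (ε / 2) * ‖y‖ := by
        rw [hx, real_inner_smul_left, real_inner_smul_left, real_inner_self_eq_norm_sq]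
        field_simp
      have := hy x (hball hxball)
      rw [hxy] at this
      rw [le_div_iff₀ hε]
      nlinarith
  exact (isCompact_closedBall (0 : E) (2 / ε)).of_isClosed_subset (polarSet_isClosed O) hsub

lemma bipolar {O : Set E} (hcl : IsClosed O) (hconv : Convex ℝ O) (h0 : (0 : E) ∈ O) :
    polarSet (polarSet O) = O := by
  apply Set.Subset.antisymm
  · intro z hz
    by_contra hzO
    obtain ⟨f, u, hfO, hfz⟩ := geometric_hahn_banach_closed_point hconv hcl hzO
    have hu : (0 : ℝ) < u := by
      have := hfO 0 h0
      simpa using this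
    set v : E := (InnerProductSpace.toDual ℝ _).symm f with hv
    have hvx : ∀ x : E, ⟪v, x⟫ = f x := fun x => InnerProductSpace.toDual_symm_apply
    have hw : u⁻¹ • v ∈ polarSet O := by
      intro x hx
      rw [real_inner_smul_right, real_inner_comm v x, hvx]
      rw [inv_mul_le_iff₀ hu, mul_one]
      exact le_of_lt (hfO x hx)
    have := hz _ hw
    rw [real_inner_smul_left, hvx] at this
    rw [inv_mul_le_iff₀ hu, mul_one] at this
    linarith
  · intro x hx y hy
    rw [real_inner_comm]
    exact hy x hx

/-- From a relative interior point one can move a bit past it along any direction in the set. -/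
lemma exists_extend_mem {F : Set E} {x₀ x : E}
    (hx₀ : x₀ ∈ intrinsicInterior ℝ F) (hx : x ∈ F) :
    ∃ t : ℝ, 0 < t ∧ x₀ + t • (x₀ - x) ∈ F := by
  obtain ⟨a, ha, rfl⟩ := hx₀
  have ha' : (↑a : E) ∈ affineSpan ℝ F := a.2
  have hx' : x ∈ affineSpan ℝ F := subset_affineSpan ℝ F hx
  rw [mem_interior_iff_mem_nhds, nhds_induced, Filter.mem_comap] at ha
  obtain ⟨V, hV, hVF⟩ := ha
  obtain ⟨ε, hε, hball⟩ := Metric.mem_nhds_iff.mp hV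
  set d : ℝ := ‖(↑a : E) - x‖ with hd
  have hd0 : 0 ≤ d := norm_nonneg _
  set t : ℝ := ε / (2 * (d + 1)) with ht
  have htpos : 0 < t := by positivity
  refine ⟨t, htpos, ?_⟩
  set p : E := ↑a + t • (↑a - x) with hp
  have hpspan : p ∈ affineSpan ℝ F := by
    have := AffineSubspace.smul_vsub_vadd_mem (affineSpan ℝ F) t ha' hx' ha'
    simpa [hp, vsub_eq_sub, vadd_eq_add, add_comm] using this
  have hpball : p ∈ Metric.ball (↑a : E) ε := by
    simp only [hp, Metric.mem_ball, dist_eq_norm]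
    have : ↑a + t • ((↑a : E) - x) - ↑a = t • ((↑a : E) - x) := by abel
    rw [this, norm_smul, Real.norm_eq_abs, abs_of_pos htpos, ← hd]
    have h1 : t * d < t * (2 * (d + 1)) := by nlinarith
    have h2 : t * (2 * (d + 1)) = ε := by
      rw [ht]; field_simp
    linarith
  have : (⟨p, hpspan⟩ : affineSpan ℝ F) ∈ ((↑) ⁻¹' V : Set (affineSpan ℝ F)) :=
    hball hpball
  exact hVF this

lemma inner_eq_one_of_relint {F : Set E} {x₀ x y : E}
    (hx₀ : x₀ ∈ intrinsicInterior ℝ F) (hx : x ∈ F)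
    (hle : ∀ z ∈ F, ⟪z, y⟫ ≤ 1) (h1 : ⟪x₀, y⟫ = 1) : ⟪x, y⟫ = 1 := by
  obtain ⟨t, htpos, hmem⟩ := exists_extend_mem hx₀ hx
  have hcalc : ⟪x₀ + t • (x₀ - x), y⟫ = (1 + t) - t * ⟪x, y⟫ := by
    rw [inner_add_left, real_inner_smul_left, inner_sub_left, h1]
    ring
  have hub := hle _ hmem
  rw [hcalc] at hub
  have hlb := hle x hx
  nlinarith

lemma faceHat_isExposed {O F : Set E} (hOconv : Convex ℝ O) (hF : IsExposed ℝ O F) :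
    IsExposed ℝ (polarSet O) (faceHat (polarSet O) F) := by
  intro hne
  by_cases hFne : F.Nonempty
  · have hFconv : Convex ℝ F := hF.convex hOconv
    have hFsub : F ⊆ O := hF.subset
    obtain ⟨x₀, hx₀⟩ := hFne.intrinsicInterior hFconv
    have hx₀F : x₀ ∈ F := intrinsicInterior_subset hx₀
    obtain ⟨y₁, hy₁P, hy₁⟩ := hne
    refine ⟨innerSL ℝ x₀, ?_⟩
    ext y
    simp only [faceHat, Set.mem_setOf_eq, Set.mem_sep_iff,
      innerSL_apply_apply]
    constructor
    · rintro ⟨hyP, hy⟩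
      exact ⟨hyP, fun z hz => by rw [hy x₀ hx₀F]; exact hz x₀ (hFsub hx₀F)⟩
    · rintro ⟨hyP, hmax⟩
      have h1 : ⟪x₀, y⟫ = 1 := by
        have hle1 : ⟪x₀, y⟫ ≤ 1 := hyP x₀ (hFsub hx₀F)
        have hge1 : (1 : ℝ) ≤ ⟪x₀, y⟫ := by
          have := hmax y₁ hy₁P
          rwa [hy₁ x₀ hx₀F] at this
        linarith
      exact ⟨hyP, fun x hx =>
        inner_eq_one_of_relint hx₀ hx (fun z hz => hyP z (hFsub hz)) h1⟩
  · have hFe : F = ∅ := Set.not_nonempty_iff_eq_empty.mp hFne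
    refine ⟨0, ?_⟩
    ext y
    simp [faceHat, hFe]

lemma faceHat_faceHat {O : Set E} (hOcpt : IsCompact O) (hO0 : (0 : E) ∈ interior O)
    {F : Set E} (hF : IsExposed ℝ O F) :
    faceHat O (faceHat (polarSet O) F) = F := by
  have h0O : (0 : E) ∈ O := interior_subset hO0
  by_cases hFne : F.Nonempty
  · obtain ⟨l, hFeq⟩ := hF hFne
    set v : E := (InnerProductSpace.toDual ℝ _).symm l with hv
    have hvx : ∀ x : E, ⟪v, x⟫ = l x := fun x => InnerProductSpace.toDual_symm_apply
    obtain ⟨x₀, hx₀⟩ := hFne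
    rw [hFeq] at hx₀
    set m : ℝ := l x₀ with hm
    have hmax : ∀ x ∈ O, l x ≤ m := hx₀.2
    by_cases hmpos : 0 < m
    · set w : E := m⁻¹ • v with hwdef
      have hw : ∀ x : E, ⟪x, w⟫ = m⁻¹ * l x := by
        intro x
        rw [hwdef, real_inner_smul_right, real_inner_comm v x, hvx]
      have hwP : w ∈ polarSet O := by
        intro x hx
        rw [hw, inv_mul_le_iff₀ hmpos, mul_one]
        exact hmax x hx
      have hlF : ∀ x ∈ F, l x = m := by
        intro x hx
        rw [hFeq] at hx
        exact le_antisymm (hmax x hx.1) (hx.2 x₀ hx₀.1)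
      have hwhat : w ∈ faceHat (polarSet O) F := by
        refine ⟨hwP, fun x hx => ?_⟩
        rw [hw, hlF x hx, inv_mul_cancel₀ (ne_of_gt hmpos)]
      ext x
      simp only [faceHat, Set.mem_setOf_eq, Set.mem_sep_iff]
      constructor
      · rintro ⟨hxO, hx⟩
        have := hx w hwhat
        rw [real_inner_comm, hw, inv_mul_eq_one₀ (ne_of_gt hmpos)] at this
        rw [hFeq]
        exact ⟨hxO, fun y hy => by rw [← this]; exact hmax y hy⟩
      · intro hx
        have hxO : x ∈ O := by rw [hFeq] at hx; exact hx.1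
        exact ⟨hxO, fun y hy => by rw [real_inner_comm]; exact hy.2 x hx⟩
    · -- maximum is ≤ 0, hence 0 (since l 0 = 0), hence l vanishes on a ball, hence l = 0
      have hm0 : m = 0 := by
        have h0 : (0 : ℝ) ≤ m := by simpa using hmax 0 h0O
        exact le_antisymm (not_lt.mp hmpos) h0
      obtain ⟨ε, hε, hball⟩ := Metric.mem_nhds_iff.mp (mem_interior_iff_mem_nhds.mp hO0)
      have hlz : ∀ z : E, l z ≤ 0 := by
        intro z
        set c : ℝ := ε / (2 * (‖z‖ + 1)) with hc
        have hcpos : 0 < c := by positivity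
        have hcz : c • z ∈ Metric.ball (0 : E) ε := by
          simp only [Metric.mem_ball, dist_zero_right, norm_smul, Real.norm_eq_abs,
            abs_of_pos hcpos]
          have h1 : c * ‖z‖ < c * (2 * (‖z‖ + 1)) := by
            have := norm_nonneg z; nlinarith
          have h2 : c * (2 * (‖z‖ + 1)) = ε := by rw [hc]; field_simp
          linarith
        have := hmax _ (hball hcz)
        rw [map_smul, smul_eq_mul, hm0] at this
        nlinarith
      have hl0 : ∀ z : E, l z = 0 := by
        intro z
        have h1 := hlz z
        have h2 := hlz (-z)
        rw [map_neg] at h2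
        linarith
      have hFO : F = O := by
        rw [hFeq]; ext x; simp [hl0]
      rw [hFO]
      have hhat : faceHat (polarSet O) O = ∅ := by
        rw [Set.eq_empty_iff_forall_notMem]
        rintro y ⟨_, hy⟩
        have := hy 0 h0O
        simp at this
      rw [hhat]
      ext x
      simp [faceHat]
  · have hFe : F = ∅ := Set.not_nonempty_iff_eq_empty.mp hFne
    rw [hFe]
    have h1 : faceHat (polarSet O) (∅ : Set E) = polarSet O := by
      ext y; simp [faceHat]
    rw [h1, Set.eq_empty_iff_forall_notMem]
    rintro x ⟨_, hx⟩
    have := hx 0 (zero_mem_polarSet O)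
    simp at this

end Aux

/-- For a compact convex body `O ⊆ ℝⁿ` with `0` in its interior and polar body
`O° = {y : ∀ x ∈ O, ⟪x,y⟫ ≤ 1}`, the map `F ↦ F̂` sends exposed faces of `O` to
exposed faces of `O°`, is inclusion-reversing, and is an involution (hence a
bijection between the exposed faces of `O` and those of `O°`). -/
theorem polar_exposed_face_duality {n : ℕ} (O : Set (EuclideanSpace ℝ (Fin n)))
    (hOcpt : IsCompact O) (hOconv : Convex ℝ O) (hO0 : (0 : EuclideanSpace ℝ (Fin n)) ∈ interior O)
    (Opolar : Set (EuclideanSpace ℝ (Fin n)))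
    (hpolar : Opolar = {y | ∀ x ∈ O, ⟪x, y⟫ ≤ 1}) :
    (∀ F, IsExposed ℝ O F → IsExposed ℝ Opolar (faceHat Opolar F)) ∧
    (∀ F F', IsExposed ℝ O F → IsExposed ℝ O F' → F ⊆ F' →
      faceHat Opolar F' ⊆ faceHat Opolar F) ∧
    (∀ F, IsExposed ℝ O F → faceHat O (faceHat Opolar F) = F) ∧
    (∀ G, IsExposed ℝ Opolar G → faceHat Opolar (faceHat O G) = G) := by
  have hpolar' : Opolar = polarSet O := hpolar
  subst hpolar'
  have h0O : (0 : EuclideanSpace ℝ (Fin n)) ∈ O := interior_subset hO0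
  have hbip : polarSet (polarSet O) = O := bipolar hOcpt.isClosed hOconv h0O
  refine ⟨fun F hF => faceHat_isExposed hOconv hF, ?_, fun F hF => faceHat_faceHat hOcpt hO0 hF,
    fun G hG => ?_⟩
  · intro F F' _ _ hsub y hy
    exact ⟨hy.1, fun x hx => hy.2 x (hsub hx)⟩
  · have := faceHat_faceHat (polarSet_isCompact hO0) (zero_mem_interior_polarSet hOcpt) hG
    rwa [hbip] at this
end

section
/- Let W be a finite group acting linearly on a finite-dimensional real inner product space 𝔞, let x ∈ 𝔞, let P_x = conv(W·x), let Q be a face of P_x, and let y ∈ P_x be such that P_y = conv(W·y) intersects Q nontrivially. Then there exists w ∈ W with w·y ∈ Q. -/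
/-- Let `W` be a finite group acting linearly on a finite-dimensional real inner
product space `𝔞`, let `x ∈ 𝔞`, `P_x = conv (W·x)`, let `Q` be a face of `P_x`
(an extreme subset), and let `y ∈ P_x` with `P_y ⊆ P_x` be such that
`P_y = conv (W·y)` meets `Q`. Then some `W`-translate of `y` lies in `Q`. -/
theorem exists_translate_mem_face
    {𝔞 : Type*} [NormedAddCommGroup 𝔞] [InnerProductSpace ℝ 𝔞] [FiniteDimensional ℝ 𝔞]
    {W : Type*} [Group W] [Finite W]
    (σ : W →* (𝔞 ≃ₗ[ℝ] 𝔞)) (x y : 𝔞) (Q : Set 𝔞)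
    (hQ : IsExtreme ℝ (convexHull ℝ (Set.range fun w => σ w x)) Q)
    (hy : y ∈ convexHull ℝ (Set.range fun w => σ w x))
    (hPy : convexHull ℝ (Set.range fun w => σ w y) ⊆
      convexHull ℝ (Set.range fun w => σ w x))
    (hmeet : (convexHull ℝ (Set.range fun w => σ w y) ∩ Q).Nonempty) :
    ∃ w : W, σ w y ∈ Q := by
  by_contra h
  push_neg at h
  have hrange : (Set.range fun w => σ w y) ⊆
      convexHull ℝ (Set.range fun w => σ w x) \ Q := by
    rintro _ ⟨w, rfl⟩
    exact ⟨hPy (subset_convexHull ℝ _ ⟨w, rfl⟩), h w⟩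
  have hconv : Convex ℝ (convexHull ℝ (Set.range fun w => σ w x) \ Q) :=
    hQ.convex_diff (convex_convexHull ℝ _)
  obtain ⟨z, hz1, hz2⟩ := hmeet
  exact (convexHull_min hrange hconv hz1).2 hz2
end

section
/- Let V be a finite-dimensional real inner product space, K a compact group acting on V by linear isometries, 𝔞 ⊆ V a linear subspace meeting every K-orbit, and π : V → 𝔞 the orthogonal projection. Suppose that for every x ∈ 𝔞 one has π(K·x) = conv(W·x) for a fixed finite group W of isometries of 𝔞 with W·x ⊆ K·x. Then for every x ∈ 𝔞, conv(K·x) ∩ 𝔞 = conv(W·x). -/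
/-- Abstract Kostant convexity setting: `K` acts on a finite-dimensional real inner
product space `V` by linear isometries, `𝔞 ⊆ V` is a subspace meeting every
`K`-orbit, `π` is the orthogonal projection onto `𝔞`, and `W` is a finite group of
linear isometries of `𝔞` with `W·x ⊆ K·x` and `π(K·x) = conv (W·x)` for all
`x ∈ 𝔞`. Then `conv (K·x) ∩ 𝔞 = conv (W·x)` for every `x ∈ 𝔞`. -/
theorem orbitope_inter_cartan_eq_momentum_polytope
    {V : Type*} [NormedAddCommGroup V] [InnerProductSpace ℝ V] [FiniteDimensional ℝ V]
    {K : Type*} [Group K] (ρ : K →* (V ≃ₗᵢ[ℝ] V))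
    (𝔞 : Submodule ℝ V)
    {W : Type*} [Group W] [Finite W] (σ : W →* (𝔞 ≃ₗᵢ[ℝ] 𝔞))
    (hmeets : ∀ v : V, ∃ g : K, ρ g v ∈ 𝔞)
    (hWK : ∀ (x : 𝔞) (w : W), ∃ g : K, ρ g (x : V) = (σ w x : V))
    (hKostant : ∀ x : 𝔞,
      (Submodule.orthogonalProjectionOnto 𝔞) '' (Set.range fun g : K => ρ g (x : V)) =
        convexHull ℝ (Set.range fun w : W => σ w x)) :
    ∀ x : 𝔞,
      convexHull ℝ (Set.range fun g : K => ρ g (x : V)) ∩ (𝔞 : Set V) =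
        Subtype.val '' (convexHull ℝ (Set.range fun w : W => σ w x)) := by
  intro x
  apply Set.Subset.antisymm
  · rintro y ⟨hy, hy𝔞⟩
    -- π(y) ∈ π(conv(Kx)) = conv(π(Kx)) = conv(Wx)
    have hπ : (Submodule.orthogonalProjectionOnto 𝔞 : V →ₗ[ℝ] 𝔞) ''
        convexHull ℝ (Set.range fun g : K => ρ g (x : V)) =
        convexHull ℝ ((Submodule.orthogonalProjectionOnto 𝔞 : V →ₗ[ℝ] 𝔞) ''
          (Set.range fun g : K => ρ g (x : V))) :=
      LinearMap.image_convexHull _ _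
    have h1 : Submodule.orthogonalProjectionOnto 𝔞 y ∈ convexHull ℝ (Set.range fun w : W => σ w x) := by
      have hmem : Submodule.orthogonalProjectionOnto 𝔞 y ∈ (Submodule.orthogonalProjectionOnto 𝔞 : V →ₗ[ℝ] 𝔞) ''
          convexHull ℝ (Set.range fun g : K => ρ g (x : V)) := ⟨y, hy, rfl⟩
      rw [hπ] at hmem
      have himg : (Submodule.orthogonalProjectionOnto 𝔞 : V →ₗ[ℝ] 𝔞) ''
          (Set.range fun g : K => ρ g (x : V)) =
          convexHull ℝ (Set.range fun w : W => σ w x) := hKostant x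
      rw [himg, (convex_convexHull ℝ _).convexHull_eq] at hmem
      exact hmem
    exact ⟨Submodule.orthogonalProjectionOnto 𝔞 y, h1, Submodule.starProjection_eq_self_iff.mpr hy𝔞⟩
  · rintro y ⟨z, hz, rfl⟩
    constructor
    · have : Subtype.val '' (convexHull ℝ (Set.range fun w : W => σ w x)) =
          convexHull ℝ (Subtype.val '' (Set.range fun w : W => σ w x)) :=
        LinearMap.image_convexHull (𝔞.subtype) _
      have hz' : (z : V) ∈ convexHull ℝ (Subtype.val '' (Set.range fun w : W => σ w x)) := by
        rw [← this]; exact ⟨z, hz, rfl⟩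
      refine convexHull_mono ?_ hz'
      rintro v ⟨w', ⟨w, rfl⟩, rfl⟩
      obtain ⟨g, hg⟩ := hWK x w
      exact ⟨g, hg⟩
    · exact z.2
end

section
/- With the same hypotheses as in the abstract Kostant setting (π(K·x) = conv(W·x) and W·x ⊆ K·x for all x ∈ 𝔞, and 𝔞 meets every K-orbit), any two elements x, y ∈ 𝔞 that are K-conjugate are W-conjugate. -/
open RealInnerProductSpace

/-- A point of the convex hull of a set of vectors all having the same norm as
the point itself must belong to the set (strict convexity of the ball). -/
lemma mem_of_mem_convexHull_of_norm_eq
    {E : Type*} [NormedAddCommGroup E] [InnerProductSpace ℝ E]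
    {S : Set E} {y : E} (hy : y ∈ convexHull ℝ S)
    (hS : ∀ v ∈ S, ‖v‖ = ‖y‖) : y ∈ S := by
  rw [convexHull_eq] at hy
  obtain ⟨ι, t, w, z, hw, hw1, hz, hc⟩ := hy
  have hyc : y = ∑ i ∈ t, w i • z i := by
    rw [← hc, Finset.centerMass_eq_of_sum_1 _ _ hw1]
  by_cases hy0 : ‖y‖ = 0
  · have ht : t.Nonempty := Finset.nonempty_of_sum_ne_zero (by rw [hw1]; norm_num)
    obtain ⟨i, hi⟩ := ht
    have : z i = y := by
      have h1 : ‖z i‖ = 0 := by rw [hS _ (hz i hi), hy0]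
      have h2 : y = 0 := norm_eq_zero.mp hy0
      rw [h2]; exact norm_eq_zero.mp h1
    rw [← this]; exact hz i hi
  · -- key: some i with w i > 0 has z i = y
    by_contra hys
    have hne : ∀ i ∈ t, 0 < w i → z i ≠ y := by
      intro i hi hwi h
      exact hys (h ▸ hz i hi)
    have hlt : ∀ i ∈ t, 0 < w i → (⟪y, z i⟫) < ‖y‖ ^ 2 := by
      intro i hi hwi
      have hle : (⟪y, z i⟫) ≤ ‖y‖ * ‖z i‖ := real_inner_le_norm y (z i)
      have hzn : ‖z i‖ = ‖y‖ := hS _ (hz i hi)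
      rw [hzn] at hle
      rcases lt_or_eq_of_le hle with h | h
      · calc (⟪y, z i⟫) < ‖y‖ * ‖y‖ := h
          _ = ‖y‖ ^ 2 := by ring
      · exfalso
        have h' : (⟪y, z i⟫) = ‖y‖ * ‖z i‖ := by rw [hzn]; exact h
        have := (inner_eq_norm_mul_iff_real (x := y) (y := z i)).mp h'
        rw [hzn] at this
        have : y = z i := smul_right_injective E hy0 this
        exact hne i hi hwi this.symm
    have hsum : (⟪y, y⟫) < ‖y‖ ^ 2 := by
      have hex : ∃ i ∈ t, 0 < w i := by
        by_contra h
        push_neg at h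
        have : ∑ i ∈ t, w i = 0 :=
          Finset.sum_eq_zero fun i hi => le_antisymm (h i hi) (hw i hi)
        rw [hw1] at this; norm_num at this
      obtain ⟨j, hj, hwj⟩ := hex
      calc (⟪y, y⟫) = ∑ i ∈ t, w i * (⟪y, z i⟫) := by
            rw [hyc]
            rw [inner_sum]
            exact Finset.sum_congr rfl fun i hi => real_inner_smul_right _ _ _
        _ < ∑ i ∈ t, w i * ‖y‖ ^ 2 := by
            apply Finset.sum_lt_sum
            · intro i hi
              rcases (hw i hi).lt_or_eq with h | h
              · exact le_of_lt (by
                  exact mul_lt_mul_of_pos_left (hlt i hi h) h)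
              · rw [← h]; simp
            · exact ⟨j, hj, mul_lt_mul_of_pos_left (hlt j hj hwj) hwj⟩
        _ = ‖y‖ ^ 2 := by rw [← Finset.sum_mul, hw1, one_mul]
    rw [real_inner_self_eq_norm_sq] at hsum
    exact lt_irrefl _ hsum

/-- In the abstract Kostant setting (`π(K·x) = conv (W·x)` and `W·x ⊆ K·x` for all
`x ∈ 𝔞`, and `𝔞` meets every `K`-orbit), any two elements of `𝔞` that are
`K`-conjugate are already `W`-conjugate. -/
theorem k_conjugate_imp_w_conjugate
    {V : Type*} [NormedAddCommGroup V] [InnerProductSpace ℝ V] [FiniteDimensional ℝ V]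
    {K : Type*} [Group K] (ρ : K →* (V ≃ₗᵢ[ℝ] V))
    (𝔞 : Submodule ℝ V)
    {W : Type*} [Group W] [Finite W] (σ : W →* (𝔞 ≃ₗᵢ[ℝ] 𝔞))
    (hmeets : ∀ v : V, ∃ g : K, ρ g v ∈ 𝔞)
    (hWK : ∀ (x : 𝔞) (w : W), ∃ g : K, ρ g (x : V) = (σ w x : V))
    (hKostant : ∀ x : 𝔞,
      (𝔞.orthogonalProjectionOnto) '' (Set.range fun g : K => ρ g (x : V)) =
        convexHull ℝ (Set.range fun w : W => σ w x))
    (x y : 𝔞) (g : K) (hconj : ρ g (x : V) = (y : V)) :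
    ∃ w : W, σ w x = y := by
  have hy : y ∈ convexHull ℝ (Set.range fun w : W => σ w x) := by
    rw [← hKostant x]
    refine ⟨(y : V), ⟨g, hconj⟩, ?_⟩
    exact Submodule.orthogonalProjectionOnto_mem_subspace_eq_self y
  have hnorm : ∀ v ∈ Set.range (fun w : W => σ w x), ‖v‖ = ‖y‖ := by
    rintro v ⟨w, rfl⟩
    have h1 : ‖(σ w x : 𝔞)‖ = ‖x‖ := (σ w).norm_map x
    have h2 : ‖(y : 𝔞)‖ = ‖x‖ := by
      have : ‖(y : V)‖ = ‖(x : V)‖ := by rw [← hconj]; exact (ρ g).norm_map _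
      simpa using this
    rw [h1, h2]
  obtain ⟨w, hw⟩ := mem_of_mem_convexHull_of_norm_eq hy hnorm
  exact ⟨w, hw⟩
end

section
/- Let O ⊂ V be a K-invariant convex subset of a finite-dimensional real inner product space V, where K acts by linear isometries, let 𝔞 ⊆ V be a subspace with orthogonal projection π, and suppose π(O) = O ∩ 𝔞 =: Q. Then π(O°) = O° ∩ 𝔞 = Q°, where Q° is the polar of Q taken inside 𝔞. -/
open RealInnerProductSpace

/-- Let `O ⊆ V` be a `K`-invariant convex subset of a finite-dimensional real inner
product space, where `K` acts by linear isometries, let `𝔞 ⊆ V` be a subspace with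
orthogonal projection `π`, and suppose `π(O) = O ∩ 𝔞 =: Q`. Then
`π(O°) = O° ∩ 𝔞 = Q°`, where `Q°` is the polar of `Q` inside `𝔞`. -/
theorem polar_commutes_with_projection
    {V : Type*} [NormedAddCommGroup V] [InnerProductSpace ℝ V] [FiniteDimensional ℝ V]
    {K : Type*} [Group K] (ρ : K →* (V ≃ₗᵢ[ℝ] V))
    (O : Set V) (hconv : Convex ℝ O)
    (hinv : ∀ g : K, (fun v => ρ g v) '' O = O)
    (𝔞 : Submodule ℝ V)
    (Q : Set 𝔞) (hQ : Q = {a : 𝔞 | (a : V) ∈ O})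
    (hproj : (𝔞.orthogonalProjectionOnto) '' O = Q) :
    (𝔞.orthogonalProjectionOnto) '' {z : V | ∀ y ∈ O, ⟪y, z⟫ ≤ 1} =
        {z : 𝔞 | ∀ y ∈ Q, ⟪y, z⟫ ≤ 1} ∧
    {a : 𝔞 | (a : V) ∈ {z : V | ∀ y ∈ O, ⟪y, z⟫ ≤ 1}} =
        {z : 𝔞 | ∀ y ∈ Q, ⟪y, z⟫ ≤ 1} := by
  have key : {a : 𝔞 | (a : V) ∈ {z : V | ∀ y ∈ O, ⟪y, z⟫ ≤ 1}} =
      {z : 𝔞 | ∀ y ∈ Q, ⟪y, z⟫ ≤ 1} := by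
    ext a
    constructor
    · intro ha y hy
      rw [Submodule.coe_inner]
      have hy' : (y : V) ∈ O := by rw [hQ] at hy; exact hy
      exact ha _ hy'
    · intro ha y hy
      have : 𝔞.orthogonalProjectionOnto y ∈ Q := hproj ▸ Set.mem_image_of_mem _ hy
      have h := ha _ this
      rwa [Submodule.inner_orthogonalProjectionOnto_eq_of_mem_right] at h
  refine ⟨?_, key⟩
  ext w
  constructor
  · rintro ⟨z, hz, rfl⟩ y hy
    rw [Submodule.inner_orthogonalProjectionOnto_eq_of_mem_left]
    have hy' : (y : V) ∈ O := by rw [hQ] at hy; exact hy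
    exact hz _ hy'
  · intro hw
    refine ⟨(w : V), ?_, ?_⟩
    · exact (Set.ext_iff.mp key w).mpr hw
    · simp [Submodule.orthogonalProjectionOnto_mem_subspace_eq_self]
end

section
/- Let A be an irreducible Cartan matrix (of a finite-type root system). Then all entries of A⁻¹ are strictly positive. Consequently, for simple roots β₁,…,β_n of an irreducible finite root system with fundamental coweights μ₁,…,μ_n (⟨β_i, μ_j⟩ = δ_{ij}), every nonzero x in the closed Weyl chamber C satisfies μ_i(x) > 0 for all i. -/
open RealInnerProductSpace

/-- Let `β 1, …, β n` be the simple roots of an irreducible finite root system in a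
Euclidean space (linearly independent, spanning, pairwise obtuse, with connected
Dynkin graph), with Cartan matrix `A i j = 2⟪β i, β j⟫/⟪β j, β j⟫` and fundamental
coweights `μ 1, …, μ n` (`⟪β i, μ j⟫ = δ_{ij}`). Then `A` is invertible with all
entries of `A⁻¹` strictly positive, and every nonzero `x` in the closed Weyl
chamber (`⟪β j, x⟫ ≥ 0` for all `j`) satisfies `⟪μ i, x⟫ > 0` for all `i`. -/
theorem cartan_inverse_pos_and_coweights_pos
    {𝔞 : Type*} [NormedAddCommGroup 𝔞] [InnerProductSpace ℝ 𝔞] [FiniteDimensional ℝ 𝔞]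
    {n : ℕ} (β μ : Fin n → 𝔞)
    (hindep : LinearIndependent ℝ β)
    (hspan : Submodule.span ℝ (Set.range β) = ⊤)
    (hobtuse : ∀ i j, i ≠ j → ⟪β i, β j⟫ ≤ 0)
    (hdual : ∀ i j, ⟪β i, μ j⟫ = if i = j then (1 : ℝ) else 0)
    (hirr : ∀ S : Set (Fin n), (∀ i ∈ S, ∀ j ∉ S, ⟪β i, β j⟫ = 0) →
      S = ∅ ∨ S = Set.univ)
    (A : Matrix (Fin n) (Fin n) ℝ)
    (hA : A = Matrix.of fun i j => 2 * ⟪β i, β j⟫ / ⟪β j, β j⟫) :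
    IsUnit A.det ∧ (∀ i j, 0 < A⁻¹ i j) ∧
      (∀ x : 𝔞, (∀ j, 0 ≤ ⟪β j, x⟫) → x ≠ 0 → ∀ i, 0 < ⟪μ i, x⟫) := by
  classical
  have hβne : ∀ k, β k ≠ 0 := fun k => hindep.ne_zero k
  have hpos : ∀ v : 𝔞, v ≠ 0 → (0:ℝ) < ⟪v, v⟫ := by
    intro v hv
    rcases lt_or_ge 0 ⟪v, v⟫ with h | h
    · exact h
    · exact absurd (real_inner_self_nonpos.mp h) hv
  have hG : ∀ k, (0:ℝ) < ⟪β k, β k⟫ := fun k => hpos _ (hβne k)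
  let b : Module.Basis (Fin n) ℝ 𝔞 := Module.Basis.mk hindep (by rw [hspan])
  have hb : ∀ k, b k = β k := fun k => by simp [b]
  -- extensionality w.r.t. inner products with the β's
  have hext : ∀ u : 𝔞, (∀ i, ⟪β i, u⟫ = 0) → u = 0 := by
    intro u hu
    have h1 : (∑ k, b.repr u k • β k) = u := by
      simpa [hb] using b.sum_repr u
    have h2 : ⟪u, u⟫ = 0 := by
      nth_rewrite 1 [← h1]
      rw [sum_inner]
      refine Finset.sum_eq_zero fun k _ => ?_
      rw [real_inner_smul_left, hu k, mul_zero]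
    exact inner_self_eq_zero.mp h2
  -- coefficients of μ i in the basis β
  set d : Fin n → Fin n → ℝ := fun i k => b.repr (μ i) k with hd_def
  have hrep : ∀ i, (∑ k, d i k • β k) = μ i := fun i => by
    simpa [hb, hd_def] using b.sum_repr (μ i)
  have hd : ∀ i k, ⟪μ k, μ i⟫ = d i k := by
    intro i k
    conv_lhs => rw [← hrep i]
    rw [inner_sum]
    have : ∀ l, ⟪μ k, d i l • β l⟫ = d i l * (if l = k then (1:ℝ) else 0) := by
      intro l
      rw [real_inner_smul_right, real_inner_comm, hdual]
    rw [Finset.sum_congr rfl fun l _ => this l]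
    simp
  -- nonnegativity of the coefficients
  have hdnn : ∀ i k, 0 ≤ d i k := by
    intro i k
    by_contra hneg
    push_neg at hneg
    set N : Finset (Fin n) := Finset.univ.filter (fun l => d i l < 0) with hN
    set v : 𝔞 := ∑ l ∈ N, (-(d i l)) • β l with hv
    set p : 𝔞 := ∑ l ∈ Finset.univ.filter (fun l => ¬ d i l < 0), d i l • β l with hp
    have hμeq : μ i = p - v := by
      rw [← hrep i, ← Finset.sum_filter_add_sum_filter_not Finset.univ
        (fun l => ¬ d i l < 0) (fun l => d i l • β l)]
      have : (∑ l ∈ Finset.univ.filter (fun l => ¬¬ d i l < 0), d i l • β l) = -v := by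
        rw [hv, ← Finset.sum_neg_distrib]
        refine Finset.sum_congr ?_ fun l _ => by rw [neg_smul, neg_neg]
        simp [hN]
      rw [this, hp]
      abel
    have hvμ : 0 ≤ ⟪v, μ i⟫ := by
      rw [hv, sum_inner]
      refine Finset.sum_nonneg fun l hl => ?_
      rw [real_inner_smul_left, hdual]
      have hl' : d i l < 0 := by simpa [hN] using hl
      have : (0:ℝ) ≤ if l = i then 1 else 0 := by positivity
      exact mul_nonneg (by linarith) this
    have hpv : ⟪p, v⟫ ≤ 0 := by
      rw [hp, hv, sum_inner]
      refine Finset.sum_nonpos fun k' hk' => ?_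
      rw [real_inner_smul_left, inner_sum]
      have hk'' : ¬ d i k' < 0 := by simpa using hk'
      refine mul_nonpos_of_nonneg_of_nonpos (by linarith) ?_
      refine Finset.sum_nonpos fun l hl => ?_
      have hl' : d i l < 0 := by simpa [hN] using hl
      have hne : k' ≠ l := fun h => hk'' (h ▸ hl')
      rw [real_inner_smul_right]
      exact mul_nonpos_of_nonneg_of_nonpos (by linarith) (hobtuse k' l hne)
    have hvv : ⟪v, v⟫ ≤ 0 := by
      have : ⟪v, μ i⟫ = ⟪v, p⟫ - ⟪v, v⟫ := by
        rw [hμeq, inner_sub_right]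
      have hvp : ⟪v, p⟫ ≤ 0 := by rw [real_inner_comm]; exact hpv
      linarith
    have hv0 : v = 0 := inner_self_eq_zero.mp
      (le_antisymm hvv real_inner_self_nonneg)
    -- contradiction with linear independence
    set g : Fin n → ℝ := fun l => if d i l < 0 then -(d i l) else 0 with hg
    have hsum : (∑ l, g l • β l) = 0 := by
      rw [show (∑ l, g l • β l) = v from ?_, hv0]
      rw [hv, Finset.sum_filter]
      refine Finset.sum_congr rfl fun l _ => ?_
      by_cases h : d i l < 0 <;> simp [hg, h]
    have := (Fintype.linearIndependent_iff.mp hindep) g hsum k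
    rw [hg] at this
    simp only [if_pos hneg] at this
    linarith
  have hμne : ∀ k, μ k ≠ 0 := by
    intro k h
    have := hdual k k
    rw [h, inner_zero_right] at this
    simp at this
  -- strict positivity via irreducibility
  have hdpos : ∀ i k, 0 < d i k := by
    intro i k
    by_contra hk
    push_neg at hk
    set S : Set (Fin n) := {l | 0 < d i l} with hS
    have hiS : i ∈ S := by
      have h1 : d i i = ⟪μ i, μ i⟫ := (hd i i).symm
      have : 0 < ⟪μ i, μ i⟫ := hpos _ (hμne i)
      simpa [hS, h1] using this
    have hsep : ∀ a ∈ S, ∀ l ∉ S, ⟪β a, β l⟫ = 0 := by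
      intro a ha l hl
      have hdl : d i l = 0 := le_antisymm (by simpa [hS] using hl) (hdnn i l)
      have hli : l ≠ i := fun h => by rw [h] at hl; exact hl hiS
      have hinner : ⟪β l, μ i⟫ = 0 := by rw [hdual, if_neg hli]
      have hsum : (∑ k', d i k' * ⟪β l, β k'⟫) = 0 := by
        rw [← hinner]
        conv_rhs => rw [← hrep i]
        rw [inner_sum]
        exact Finset.sum_congr rfl fun k' _ => by rw [real_inner_smul_right]
      have hterms : ∀ k' ∈ Finset.univ, d i k' * ⟪β l, β k'⟫ ≤ 0 := by
        intro k' _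
        rcases eq_or_ne k' l with rfl | hne
        · rw [hdl, zero_mul]
        · exact mul_nonpos_of_nonneg_of_nonpos (hdnn i k')
            (hobtuse l k' (Ne.symm hne))
      have hzero := (Finset.sum_eq_zero_iff_of_nonpos hterms).mp hsum a
        (Finset.mem_univ a)
      have haS : 0 < d i a := ha
      have : ⟪β l, β a⟫ = 0 := by
        rcases mul_eq_zero.mp hzero with h | h
        · exact absurd h (ne_of_gt haS)
        · exact h
      rw [real_inner_comm]; exact this
    rcases hirr S hsep with h | h
    · rw [h] at hiS; exact hiS
    · have : k ∈ S := h ▸ Set.mem_univ k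
      have : 0 < d i k := this
      linarith
  have hμμpos : ∀ i j, 0 < ⟪μ i, μ j⟫ := fun i j => (hd j i) ▸ hdpos j i
  -- the explicit inverse
  set B : Matrix (Fin n) (Fin n) ℝ :=
    Matrix.of (fun k j => ⟪β k, β k⟫ / 2 * ⟪μ k, μ j⟫) with hB
  have hAB : A * B = 1 := by
    ext i j
    rw [Matrix.mul_apply, hA, hB]
    simp only [Matrix.of_apply]
    have h1 : ∀ k, 2 * ⟪β i, β k⟫ / ⟪β k, β k⟫ * (⟪β k, β k⟫ / 2 * ⟪μ k, μ j⟫)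
        = ⟪β i, β k⟫ * ⟪μ k, μ j⟫ := by
      intro k
      have := (hG k).ne'
      field_simp
    rw [Finset.sum_congr rfl fun k _ => h1 k]
    have h2 : (∑ k, ⟪β i, β k⟫ * ⟪μ k, μ j⟫) = ⟪β i, μ j⟫ := by
      conv_rhs => rw [← hrep j]
      rw [inner_sum]
      refine Finset.sum_congr rfl fun k _ => ?_
      rw [real_inner_smul_right, hd j k]
      ring
    rw [h2, hdual, Matrix.one_apply]
  have hdet : IsUnit A.det := by
    have h := congrArg Matrix.det hAB
    rw [Matrix.det_mul, Matrix.det_one] at h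
    exact IsUnit.of_mul_eq_one _ h
  have hAinv : A⁻¹ = B := Matrix.inv_eq_right_inv hAB
  refine ⟨hdet, ?_, ?_⟩
  · intro i j
    rw [hAinv, hB]
    exact mul_pos (div_pos (hG i) two_pos) (hμμpos i j)
  · intro x hx hx0 i
    have hxrep : x = ∑ j, ⟪β j, x⟫ • μ j := by
      have h0 : x - (∑ j, ⟪β j, x⟫ • μ j) = 0 := by
        apply hext
        intro k
        rw [inner_sub_right, inner_sum]
        have : ∀ j, ⟪β k, ⟪β j, x⟫ • μ j⟫ = ⟪β j, x⟫ * (if k = j then (1:ℝ) else 0) := by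
          intro j
          rw [real_inner_smul_right, hdual]
        rw [Finset.sum_congr rfl fun j _ => this j]
        simp
      exact sub_eq_zero.mp h0
    have hfin : ⟪μ i, x⟫ = ∑ j, ⟪β j, x⟫ * ⟪μ i, μ j⟫ := by
      conv_lhs => rw [hxrep]
      rw [inner_sum]
      exact Finset.sum_congr rfl fun j _ => by rw [real_inner_smul_right]
    rw [hfin]
    have hex : ∃ j, ⟪β j, x⟫ ≠ 0 := by
      by_contra h
      push_neg at h
      exact hx0 (hext x h)
    obtain ⟨j, hj⟩ := hex
    refine Finset.sum_pos' (fun k _ => mul_nonneg (hx k) (hμμpos i k).le)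
      ⟨j, Finset.mem_univ j, ?_⟩
    exact mul_pos (lt_of_le_of_ne (hx j) (Ne.symm hj)) (hμμpos i j)
end

section
/- For m ≥ n, 1 ≤ k ≤ n, the unit ball of the k-th Ky Fan norm on M_{m×n}(ℝ) is a spectrahedron: B_k = {x ∈ M_{m×n}(ℝ) : Λᵏ(x̂) ⪯ I}, where x̂ = [[0,x],[xᵀ,0]] and Λᵏ denotes the derivation action on the k-th exterior power of ℝ^{m+n}. -/
open Polynomial Matrix

/-- The `k`-th Ky Fan norm of a real `m × n` matrix: the sum of its `k` largest
singular values. -/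
noncomputable def kyFanNorm {m n : ℕ} (k : ℕ) (x : Matrix (Fin m) (Fin n) ℝ) : ℝ :=
  sSup {t | ∃ s : Finset (Fin n), s.card = k ∧
    t = ∑ i ∈ s, Real.sqrt ((Matrix.isHermitian_conjTranspose_mul_self x).eigenvalues i)}

/-- The `k`-th multiplicative compound of a square matrix: the matrix of `⋀ᵏ M` in
the standard basis, with entries the `k × k` minors of `M`. -/
noncomputable def multCompound {R : Type*} [CommRing R] (k N : ℕ)
    (M : Matrix (Fin N) (Fin N) R) :
    Matrix {s : Finset (Fin N) // s.card = k} {s : Finset (Fin N) // s.card = k} R :=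
  fun S T => (M.submatrix (fun i => ((S.1.orderIsoOfFin S.2 i : Fin N)))
    (fun i => ((T.1.orderIsoOfFin T.2 i : Fin N)))).det

/-- The `k`-th additive compound `Λᵏ(M)`: the matrix of the derivation action of
`M` on the `k`-th exterior power, the coefficient of `t` in the multiplicative
compound of `1 + t M`. -/
noncomputable def addCompound {R : Type*} [CommRing R] (k N : ℕ)
    (M : Matrix (Fin N) (Fin N) R) :
    Matrix {s : Finset (Fin N) // s.card = k} {s : Finset (Fin N) // s.card = k} R :=
  fun S T => ((multCompound k N ((X : R[X]) • M.map C + 1)) S T).coeff 1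


section Aux

open Finset


variable {R : Type*} [CommRing R] {k N : ℕ}

abbrev KSub (k N : ℕ) := {s : Finset (Fin N) // s.card = k}

noncomputable def emb (S : KSub k N) : Fin k → Fin N := fun i => S.1.orderEmbOfFin S.2 i

lemma emb_injective (S : KSub k N) : Function.Injective (emb S) :=
  (S.1.orderEmbOfFin S.2).injective

lemma emb_mem (S : KSub k N) (i : Fin k) : emb S i ∈ S.1 := Finset.orderEmbOfFin_mem _ _ _

lemma image_emb (S : KSub k N) : Finset.image (emb S) Finset.univ = S.1 := by
  apply Finset.eq_of_subset_of_card_le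
  · intro a ha
    simp only [Finset.mem_image] at ha
    obtain ⟨i, _, rfl⟩ := ha
    exact emb_mem S i
  · rw [S.2, Finset.card_image_of_injective _ (emb_injective S), Finset.card_univ,
      Fintype.card_fin]

noncomputable def pairOf (p : Fin k → Fin N) (hp : Function.Injective p) :
    KSub k N × Equiv.Perm (Fin k) :=
  letI S : KSub k N := ⟨Finset.image p Finset.univ, by
    rw [Finset.card_image_of_injective _ hp, Finset.card_univ, Fintype.card_fin]⟩
  ⟨S, Equiv.ofBijective (fun i => (S.1.orderIsoOfFin S.2).symm
      ⟨p i, Finset.mem_image_of_mem p (Finset.mem_univ i)⟩)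
    (Finite.injective_iff_bijective.mp (fun i j hij => hp (by
      have := congrArg (fun z => ((S.1.orderIsoOfFin S.2) z : Fin N)) hij
      simpa using this)))⟩

lemma pairOf_spec (p : Fin k → Fin N) (hp : Function.Injective p) (i : Fin k) :
    emb (pairOf p hp).1 ((pairOf p hp).2 i) = p i := by
  simp only [pairOf, emb, Equiv.ofBijective_apply]
  rw [← Finset.coe_orderIsoOfFin_apply]
  simp

/-- **Cauchy–Binet** -/
theorem cauchy_binet (A : Matrix (Fin k) (Fin N) R) (B : Matrix (Fin N) (Fin k) R) :
    det (A * B) = ∑ S : KSub k N,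
      det (A.submatrix id (emb S)) * det (B.submatrix (emb S) id) := by
  classical
  have h1 : det (A * B) =
      ∑ p : Fin k → Fin N, (∏ i, A i (p i)) * det (B.submatrix p id) := by
    have hAB : (A * B) = Matrix.of (fun i => ∑ x : Fin N, A i x • B x) := by
      ext i j; simp [Matrix.mul_apply]
    rw [hAB]
    have := (detRowAlternating : (Fin k → R) [⋀^Fin k]→ₗ[R] R).toMultilinearMap.map_sum
      (g := fun i x => A i x • B x)
    rw [show (Matrix.of fun i => ∑ x : Fin N, A i x • B x).det
      = (detRowAlternating : (Fin k → R) [⋀^Fin k]→ₗ[R] R).toMultilinearMap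
          (fun i => ∑ x : Fin N, A i x • B x) from rfl, this]
    refine Fintype.sum_congr _ _ fun p => ?_
    have := (detRowAlternating : (Fin k → R) [⋀^Fin k]→ₗ[R] R).toMultilinearMap.map_smul_univ
      (fun i => A i (p i)) (fun i => B (p i))
    rw [this]
    simp only [smul_eq_mul]
    rfl
  rw [h1]
  rw [← Finset.sum_filter_add_sum_filter_not Finset.univ
    (fun p : Fin k → Fin N => Function.Injective p)]
  have h2 : ∑ p ∈ Finset.univ.filter
      (fun p : Fin k → Fin N => ¬ Function.Injective p),
      (∏ i, A i (p i)) * det (B.submatrix p id) = 0 := by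
    refine Finset.sum_eq_zero fun p hp => ?_
    have hp' := (Finset.mem_filter.mp hp).2
    simp only [Function.Injective] at hp'
    push_neg at hp'
    obtain ⟨i, j, hij, hne⟩ := hp'
    have hz : det (B.submatrix p id) = 0 :=
      Matrix.det_zero_of_row_eq hne (by funext c; simp [Matrix.submatrix, hij])
    rw [hz, mul_zero]
  rw [h2, add_zero]
  have h3 : ∀ S : KSub k N, det (A.submatrix id (emb S)) * det (B.submatrix (emb S) id)
      = ∑ σ : Equiv.Perm (Fin k),
        (∏ i, A i (emb S (σ i))) * det (B.submatrix (emb S ∘ σ) id) := by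
    intro S
    have hdet : ∀ σ : Equiv.Perm (Fin k), det (B.submatrix (emb S ∘ σ) id)
        = (Equiv.Perm.sign σ : ℤ) * det (B.submatrix (emb S) id) := by
      intro σ
      rw [show B.submatrix (emb S ∘ σ) id = (B.submatrix (emb S) id).submatrix σ id by
        ext i j; simp [Matrix.submatrix]]
      rw [Matrix.det_permute]
    simp_rw [hdet]
    rw [show det (A.submatrix id (emb S)) = det (A.submatrix id (emb S))ᵀ from
      (Matrix.det_transpose _).symm]
    rw [Matrix.det_apply']
    rw [Finset.sum_mul]
    refine Fintype.sum_congr _ _ fun σ => ?_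
    simp only [Matrix.transpose_apply, Matrix.submatrix_apply, id_eq]
    ring
  simp_rw [h3]
  rw [← Finset.sum_product']
  refine (Finset.sum_bij' (fun (Sσ : KSub k N × Equiv.Perm (Fin k)) _ => emb Sσ.1 ∘ Sσ.2)
    (fun p hp => pairOf p (by simpa using (Finset.mem_filter.mp hp).2)) ?_ ?_ ?_ ?_ ?_).symm
  · intro Sσ _
    simp only [Finset.mem_filter, Finset.mem_univ, true_and]
    exact (emb_injective Sσ.1).comp Sσ.2.injective
  · intro p hp; exact Finset.mem_univ _
  · -- left inverse : pairOf (emb S ∘ σ) = (S, σ)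
    intro Sσ _
    obtain ⟨S, σ⟩ := Sσ
    have hinj : Function.Injective (emb S ∘ σ) := (emb_injective S).comp σ.injective
    have hr : emb (pairOf _ hinj).1 ∘ (pairOf _ hinj).2 = emb S ∘ σ := by
      funext i; exact pairOf_spec _ hinj i
    have h1 : (pairOf (emb S ∘ σ) hinj).1 = S := by
      apply Subtype.ext
      have himg : Finset.image (emb (pairOf (emb S ∘ σ) hinj).1
          ∘ ((pairOf (emb S ∘ σ) hinj).2 : Equiv.Perm (Fin k))) Finset.univ
          = Finset.image (emb S ∘ σ) Finset.univ := by rw [hr]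
      rw [← Finset.image_image, ← Finset.image_image (g := emb S) (f := σ)] at himg
      rw [Finset.image_univ_of_surjective ((pairOf (emb S ∘ σ) hinj).2).surjective,
        Finset.image_univ_of_surjective σ.surjective] at himg
      rw [image_emb, image_emb] at himg
      exact himg
    have h2 : ((pairOf (emb S ∘ σ) hinj).2 : Equiv.Perm (Fin k)) = σ := by
      apply Equiv.ext
      intro i
      apply emb_injective S
      have := congrFun hr i
      simp only [Function.comp_apply] at this ⊢
      rw [← this, h1]
    exact Prod.ext h1 h2
  · intro p hp
    funext i
    exact pairOf_spec p _ i
  · intro Sσ _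
    rfl

section Compound

variable {R : Type*} [CommRing R] {k N : ℕ}

lemma emb_surj (S : KSub k N) {a : Fin N} (ha : a ∈ S.1) : ∃ i, emb S i = a := by
  refine ⟨(S.1.orderIsoOfFin S.2).symm ⟨a, ha⟩, ?_⟩
  show ((S.1.orderIsoOfFin S.2) ((S.1.orderIsoOfFin S.2).symm ⟨a, ha⟩) : Fin N) = a
  rw [OrderIso.apply_symm_apply]

lemma exists_not_mem_of_ne {S T : KSub k N} (h : S ≠ T) : ∃ a ∈ T.1, a ∉ S.1 := by
  by_contra hc
  push_neg at hc
  have hsub : T.1 ⊆ S.1 := hc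
  have : T.1 = S.1 := Finset.eq_of_subset_of_card_le hsub (by rw [S.2, T.2])
  exact h (Subtype.ext this.symm)

lemma multCompound_apply (M : Matrix (Fin N) (Fin N) R) (S T : KSub k N) :
    multCompound k N M S T = (M.submatrix (emb S) (emb T)).det := rfl

lemma prod_emb (S : KSub k N) (g : Fin N → R) :
    ∏ i : Fin k, g (emb S i) = ∏ a ∈ S.1, g a := by
  rw [← image_emb S, Finset.prod_image (fun i _ j _ h => emb_injective S h)]

lemma sum_emb (S : KSub k N) (g : Fin N → R) :
    ∑ i : Fin k, g (emb S i) = ∑ a ∈ S.1, g a := by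
  rw [← image_emb S, Finset.sum_image (fun i _ j _ h => emb_injective S h)]

theorem multCompound_mul (A B : Matrix (Fin N) (Fin N) R) :
    multCompound k N (A * B) = multCompound k N A * multCompound k N B := by
  ext S T
  rw [Matrix.mul_apply, multCompound_apply]
  have hsub : (A * B).submatrix (emb S) (emb T)
      = (A.submatrix (emb S) id) * (B.submatrix id (emb T)) := by
    ext i j; simp [Matrix.mul_apply]
  rw [hsub, cauchy_binet]
  refine Finset.sum_congr rfl fun U _ => ?_
  rw [multCompound_apply, multCompound_apply, Matrix.submatrix_submatrix,
    Matrix.submatrix_submatrix]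
  simp [Function.comp_def]

theorem multCompound_diagonal (f : Fin N → R) :
    multCompound k N (Matrix.diagonal f)
      = Matrix.diagonal (fun S : KSub k N => ∏ i ∈ S.1, f i) := by
  ext S T
  by_cases h : S = T
  · subst h
    rw [multCompound_apply, Matrix.diagonal_apply_eq]
    have hsub : (Matrix.diagonal f).submatrix (emb S) (emb S)
        = Matrix.diagonal (fun i => f (emb S i)) := by
      ext i j
      rcases eq_or_ne i j with rfl | hij
      · simp
      · rw [Matrix.submatrix_apply, Matrix.diagonal_apply_ne _ hij,
          Matrix.diagonal_apply_ne _ (fun hh => hij (emb_injective S hh))]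
    rw [hsub, Matrix.det_diagonal, prod_emb]
  · rw [multCompound_apply, Matrix.diagonal_apply_ne _ h]
    obtain ⟨a, haT, haS⟩ := exists_not_mem_of_ne h
    obtain ⟨j₀, rfl⟩ := emb_surj T haT
    refine Matrix.det_eq_zero_of_column_eq_zero j₀ fun i => ?_
    rw [Matrix.submatrix_apply, Matrix.diagonal_apply_ne _
      (fun hh => haS (by rw [← hh]; exact emb_mem S i))]

theorem multCompound_one : multCompound k N (1 : Matrix (Fin N) (Fin N) R) = 1 := by
  rw [show (1 : Matrix (Fin N) (Fin N) R) = Matrix.diagonal (fun _ => 1) by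
    rw [Matrix.diagonal_one], multCompound_diagonal]
  simp [Matrix.diagonal_one]

theorem multCompound_transpose (M : Matrix (Fin N) (Fin N) R) :
    multCompound k N Mᵀ = (multCompound k N M)ᵀ := by
  ext S T
  rw [Matrix.transpose_apply, multCompound_apply, multCompound_apply,
    ← Matrix.transpose_submatrix, Matrix.det_transpose]

theorem multCompound_map {S' : Type*} [CommRing S'] (f : R →+* S')
    (M : Matrix (Fin N) (Fin N) R) :
    multCompound k N (M.map f) = (multCompound k N M).map f := by
  ext S T
  rw [Matrix.map_apply, multCompound_apply, multCompound_apply,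
    Matrix.submatrix_map, RingHom.map_det, RingHom.mapMatrix_apply]

lemma coeff_one_C_mul_mul_C (u v : R) (p : R[X]) :
    ((C u) * p * (C v)).coeff 1 = u * p.coeff 1 * v := by
  rw [show (C u) * p * (C v) = C (u * v) * p by rw [Polynomial.C_mul]; ring,
    Polynomial.coeff_C_mul]
  ring

theorem addCompound_conj (U D V : Matrix (Fin N) (Fin N) R) (hUV : U * V = 1) :
    addCompound k N (U * D * V) =
      multCompound k N U * addCompound k N D * multCompound k N V := by
  have key : (X : R[X]) • (U * D * V).map C + 1
      = (U.map (C : R →+* R[X])) * ((X : R[X]) • D.map C + 1) * (V.map (C : R →+* R[X])) := by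
    symm
    rw [Matrix.mul_add, Matrix.mul_one, Matrix.add_mul, Matrix.mul_smul, Matrix.smul_mul,
      ← Matrix.map_mul, ← Matrix.map_mul, ← Matrix.map_mul, hUV,
      Matrix.map_one _ (map_zero C) (map_one C)]
  ext S T
  show ((multCompound k N ((X : R[X]) • (U * D * V).map C + 1)) S T).coeff 1 = _
  rw [key, multCompound_mul, multCompound_mul, multCompound_map, multCompound_map]
  rw [Matrix.mul_apply, Matrix.mul_apply]
  simp only [Matrix.mul_apply, Finset.sum_mul, Finset.mul_sum]
  rw [Polynomial.finset_sum_coeff]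
  refine Finset.sum_congr rfl fun a _ => ?_
  rw [Polynomial.finset_sum_coeff]
  refine Finset.sum_congr rfl fun b _ => ?_
  rw [Matrix.map_apply, Matrix.map_apply, coeff_one_C_mul_mul_C]
  rfl

lemma coeff_zero_prod_lin {ι : Type*} (s : Finset ι) (a : ι → R) :
    ((∏ i ∈ s, ((X : R[X]) * C (a i) + 1)).coeff 0 = 1) := by
  classical
  induction s using Finset.induction_on with
  | empty => simp
  | @insert x s hx ih =>
    rw [Finset.prod_insert hx, Polynomial.mul_coeff_zero, ih]
    simp


lemma coeff_one_prod_lin {ι : Type*} (s : Finset ι) (a : ι → R) :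
    ((∏ i ∈ s, ((X : R[X]) * C (a i) + 1)).coeff 1 = ∑ i ∈ s, a i) := by
  classical
  induction s using Finset.induction_on with
  | empty => simp [Polynomial.coeff_one]
  | @insert x s hx ih =>
    rw [Finset.prod_insert hx, Finset.sum_insert hx]
    rw [add_mul, one_mul, Polynomial.coeff_add, ih, mul_assoc, Polynomial.coeff_X_mul,
      Polynomial.coeff_C_mul, coeff_zero_prod_lin]
    ring

theorem addCompound_diagonal (d : Fin N → R) :
    addCompound k N (Matrix.diagonal d)
      = Matrix.diagonal (fun S : KSub k N => ∑ i ∈ S.1, d i) := by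
  have hdiag : (X : R[X]) • (Matrix.diagonal d).map C + 1
      = Matrix.diagonal (fun i => (X : R[X]) * C (d i) + 1) := by
    ext i j
    rcases eq_or_ne i j with rfl | hij
    · simp
    · simp [Matrix.diagonal_apply_ne _ hij, Matrix.one_apply_ne hij]
  ext S T
  show ((multCompound k N ((X : R[X]) • (Matrix.diagonal d).map C + 1)) S T).coeff 1 = _
  rw [hdiag, multCompound_diagonal]
  rcases eq_or_ne S T with rfl | hST
  · rw [Matrix.diagonal_apply_eq, Matrix.diagonal_apply_eq, ← coeff_one_prod_lin S.1 d]
  · rw [Matrix.diagonal_apply_ne _ hST, Matrix.diagonal_apply_ne _ hST,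
      Polynomial.coeff_zero]

end Compound

section PSD

lemma psd_conj_iff {ι : Type*} [Fintype ι] [DecidableEq ι] (W A : Matrix ι ι ℝ)
    (h1 : W * Wᵀ = 1) :
    (W * A * Wᵀ).PosSemidef ↔ A.PosSemidef := by
  have h2 : Wᵀ * W = 1 := mul_eq_one_comm.mp h1
  constructor
  · intro h
    have h3 := h.mul_mul_conjTranspose_same Wᵀ
    rw [Matrix.conjTranspose_eq_transpose_of_trivial, Matrix.transpose_transpose] at h3
    have he : Wᵀ * (W * A * Wᵀ) * W = A := by
      simp only [← Matrix.mul_assoc]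
      rw [h2, Matrix.one_mul, Matrix.mul_assoc, h2, Matrix.mul_one]
    rwa [he] at h3
  · intro h
    have h3 := h.mul_mul_conjTranspose_same W
    rwa [Matrix.conjTranspose_eq_transpose_of_trivial] at h3

theorem one_sub_addCompound_posSemidef_iff {N : ℕ} (k : ℕ) (M : Matrix (Fin N) (Fin N) ℝ)
    (hM : M.IsHermitian) :
    (1 - addCompound k N M).PosSemidef ↔
      ∀ S : KSub k N, ∑ i ∈ S.1, hM.eigenvalues i ≤ 1 := by
  classical
  set U : Matrix (Fin N) (Fin N) ℝ := (hM.eigenvectorUnitary : Matrix (Fin N) (Fin N) ℝ)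
    with hUdef
  have hUU : U * star U = 1 := (Matrix.mem_unitaryGroup_iff).mp hM.eigenvectorUnitary.2
  have hU : U * Uᵀ = 1 := by
    rwa [Matrix.star_eq_conjTranspose, Matrix.conjTranspose_eq_transpose_of_trivial] at hUU
  have hofReal : ((RCLike.ofReal : ℝ → ℝ) ∘ hM.eigenvalues) = hM.eigenvalues := by
    funext i
    simp
  have hspec : M = U * Matrix.diagonal hM.eigenvalues * Uᵀ := by
    have h := hM.spectral_theorem
    rw [Unitary.conjStarAlgAut_apply, Matrix.star_eq_conjTranspose, Matrix.conjTranspose_eq_transpose_of_trivial,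
      hofReal] at h
    exact h
  rw [show (1 : Matrix (KSub k N) (KSub k N) ℝ) - addCompound k N M
      = 1 - addCompound k N (U * Matrix.diagonal hM.eigenvalues * Uᵀ) by rw [← hspec]]
  rw [addCompound_conj _ _ _ hU, addCompound_diagonal, multCompound_transpose]
  set W := multCompound k N U with hWdef
  set f : KSub k N → ℝ := fun S => ∑ i ∈ S.1, hM.eigenvalues i with hfdef
  have hW : W * Wᵀ = 1 := by
    rw [hWdef, ← multCompound_transpose, ← multCompound_mul, hU, multCompound_one]
  have hkey : (1 : Matrix (KSub k N) (KSub k N) ℝ) - W * Matrix.diagonal f * Wᵀ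
      = W * (1 - Matrix.diagonal f) * Wᵀ := by
    rw [Matrix.mul_sub, Matrix.sub_mul, Matrix.mul_one, hW]
  rw [hkey, psd_conj_iff _ _ hW]
  rw [show (1 : Matrix (KSub k N) (KSub k N) ℝ) - Matrix.diagonal f
      = Matrix.diagonal (fun S => 1 - f S) by
    rw [← Matrix.diagonal_one, Matrix.diagonal_sub]]
  rw [Matrix.posSemidef_diagonal_iff]
  simp [sub_nonneg]
  exact Iff.rfl

end PSD

section CharpolyFacts

lemma scalar_eq_smul_one {ι : Type*} [Fintype ι] [DecidableEq ι] {R : Type*} [CommRing R]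
    (a : R) : Matrix.scalar ι a = a • (1 : Matrix ι ι R) := by
  ext i j
  rcases eq_or_ne i j with rfl | h
  · simp
  · simp [Matrix.scalar_apply, Matrix.diagonal_apply_ne _ h, Matrix.one_apply_ne h]

lemma charpoly_conj {ι : Type*} [Fintype ι] [DecidableEq ι] {R : Type*} [CommRing R]
    (U D V : Matrix ι ι R) (hUV : U * V = 1) :
    (U * D * V).charpoly = D.charpoly := by
  have hch : Matrix.charmatrix (U * D * V)
      = (U.map (C : R →+* R[X])) * Matrix.charmatrix D * (V.map (C : R →+* R[X])) := by
    unfold Matrix.charmatrix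
    rw [Matrix.mul_sub, Matrix.sub_mul]
    congr 1
    · rw [scalar_eq_smul_one, Matrix.mul_smul, Matrix.smul_mul, Matrix.mul_one,
        ← Matrix.map_mul, hUV, Matrix.map_one _ (map_zero C) (map_one C)]
    · rw [RingHom.mapMatrix_apply, RingHom.mapMatrix_apply, ← Matrix.map_mul, ← Matrix.map_mul]
  have h2 : V * U = 1 := mul_eq_one_comm.mp hUV
  unfold Matrix.charpoly
  rw [hch, Matrix.det_mul, Matrix.det_mul, mul_comm, ← mul_assoc, ← Matrix.det_mul,
    ← Matrix.map_mul, h2, Matrix.map_one _ (map_zero C) (map_one C), Matrix.det_one, one_mul]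

lemma charpoly_diagonal {ι : Type*} [Fintype ι] [DecidableEq ι] {R : Type*} [CommRing R]
    (d : ι → R) :
    (Matrix.diagonal d).charpoly = ∏ i, (X - C (d i)) := by
  unfold Matrix.charpoly
  have hch : Matrix.charmatrix (Matrix.diagonal d)
      = Matrix.diagonal (fun i => X - C (d i)) := by
    ext i j
    rcases eq_or_ne i j with rfl | h
    · simp
    · simp [Matrix.charmatrix_apply_ne _ _ _ h, Matrix.diagonal_apply_ne _ h]
  rw [hch, Matrix.det_diagonal]

lemma charpoly_eq_prod_eigenvalues {ι : Type*} [Fintype ι] [DecidableEq ι]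
    (A : Matrix ι ι ℝ) (hA : A.IsHermitian) :
    A.charpoly = ∏ i, (X - C (hA.eigenvalues i)) := by
  set U : Matrix ι ι ℝ := (hA.eigenvectorUnitary : Matrix ι ι ℝ)
  have hUU : U * star U = 1 := (Matrix.mem_unitaryGroup_iff).mp hA.eigenvectorUnitary.2
  have hU : U * Uᵀ = 1 := by
    rwa [Matrix.star_eq_conjTranspose, Matrix.conjTranspose_eq_transpose_of_trivial] at hUU
  have hofReal : ((RCLike.ofReal : ℝ → ℝ) ∘ hA.eigenvalues) = hA.eigenvalues := by
    funext i; simp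
  have hspec : A = U * Matrix.diagonal hA.eigenvalues * Uᵀ := by
    have h := hA.spectral_theorem
    rw [Unitary.conjStarAlgAut_apply, Matrix.star_eq_conjTranspose, Matrix.conjTranspose_eq_transpose_of_trivial,
      hofReal] at h
    exact h
  conv_lhs => rw [hspec]
  rw [charpoly_conj _ _ _ hU, _root_.charpoly_diagonal]

lemma charpoly_hat {m n : ℕ} (hmn : n ≤ m) (x : Matrix (Fin m) (Fin n) ℝ) :
    (Matrix.fromBlocks 0 x xᵀ 0 : Matrix (Fin m ⊕ Fin n) (Fin m ⊕ Fin n) ℝ).charpoly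
      = X ^ (m - n) * ((xᵀ * x).charpoly).comp (X ^ 2) := by
  classical
  set K := FractionRing ℝ[X]
  set φ : ℝ[X] →+* K := algebraMap ℝ[X] K with hφdef
  have hinj : Function.Injective φ := IsFractionRing.injective ℝ[X] K
  apply hinj
  set t : K := φ X with htdef
  have ht : t ≠ 0 := fun h => Polynomial.X_ne_zero (R := ℝ)
    (hinj (show φ X = φ 0 by rw [map_zero]; exact h))
  set ψ : ℝ[X] →+* K := φ.comp (Polynomial.eval₂RingHom (C : ℝ →+* ℝ[X]) (X ^ 2)) with hψdef
  set y : Matrix (Fin m) (Fin n) K := x.map (φ.comp (C : ℝ →+* ℝ[X])) with hydef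
  -- LHS
  have hL : φ (Matrix.fromBlocks 0 x xᵀ 0 : Matrix (Fin m ⊕ Fin n) _ ℝ).charpoly
      = (Matrix.fromBlocks (Matrix.scalar (Fin m) t) (-y) (-(yᵀ)) (Matrix.scalar (Fin n) t)).det := by
    unfold Matrix.charpoly
    rw [RingHom.map_det, RingHom.mapMatrix_apply, Matrix.charmatrix_fromBlocks]
    congr 1
    rw [Matrix.fromBlocks_map, Matrix.fromBlocks_inj]
    refine ⟨?_, ?_, ?_, ?_⟩
    · show (Matrix.charmatrix (0 : Matrix (Fin m) (Fin m) ℝ)).map φ = _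
      unfold Matrix.charmatrix
      ext i j
      rcases eq_or_ne i j with rfl | h
      · simp [Matrix.scalar_apply, htdef]
      · simp [Matrix.scalar_apply, Matrix.diagonal_apply_ne _ h]
    · ext i j; simp [hydef]
    · ext i j; simp [hydef]
    · show (Matrix.charmatrix (0 : Matrix (Fin n) (Fin n) ℝ)).map φ = _
      unfold Matrix.charmatrix
      ext i j
      rcases eq_or_ne i j with rfl | h
      · simp [Matrix.scalar_apply, htdef]
      · simp [Matrix.scalar_apply, Matrix.diagonal_apply_ne _ h]
  rw [hL]
  -- invertibility of the (1,1) block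
  have hdetA : (Matrix.scalar (Fin m) t).det = t ^ m := by
    rw [Matrix.scalar_apply, Matrix.det_diagonal]; simp
  haveI : Invertible (Matrix.scalar (Fin m) t) :=
    Matrix.invertibleOfIsUnitDet _ (by rw [hdetA]; exact (pow_ne_zero m ht).isUnit)
  rw [Matrix.det_fromBlocks₁₁]
  have hinv : ⅟(Matrix.scalar (Fin m) t) = Matrix.scalar (Fin m) t⁻¹ := by
    rw [Matrix.invOf_eq_nonsing_inv]
    apply Matrix.inv_eq_right_inv
    rw [scalar_eq_smul_one, scalar_eq_smul_one, Matrix.smul_mul, Matrix.mul_smul, smul_smul,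
      Matrix.one_mul, mul_inv_cancel₀ ht, one_smul]
  rw [hinv]
  have hmid : Matrix.scalar (Fin n) t - -(yᵀ) * Matrix.scalar (Fin m) t⁻¹ * -y
      = t⁻¹ • (Matrix.scalar (Fin n) (t ^ 2) - yᵀ * y) := by
    rw [Matrix.neg_mul, Matrix.mul_neg, Matrix.neg_mul, neg_neg]
    rw [scalar_eq_smul_one, scalar_eq_smul_one, scalar_eq_smul_one]
    rw [Matrix.mul_smul, Matrix.mul_one, Matrix.smul_mul, smul_sub, smul_smul,
      show t⁻¹ * t ^ 2 = t by rw [pow_two, ← mul_assoc, inv_mul_cancel₀ ht, one_mul]]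
  rw [hmid, Matrix.det_smul]
  -- RHS
  have hR : φ (X ^ (m - n) * ((xᵀ * x).charpoly).comp (X ^ 2))
      = t ^ (m - n) * (Matrix.scalar (Fin n) (t ^ 2) - yᵀ * y).det := by
    rw [_root_.map_mul, map_pow]
    congr 1
    have hcomp : ((xᵀ * x).charpoly).comp (X ^ 2)
        = Polynomial.eval₂RingHom (C : ℝ →+* ℝ[X]) (X ^ 2) ((xᵀ * x).charpoly) := rfl
    rw [hcomp, show φ ((Polynomial.eval₂RingHom (C : ℝ →+* ℝ[X]) (X ^ 2)) ((xᵀ * x).charpoly))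
      = ψ ((xᵀ * x).charpoly) from rfl]
    unfold Matrix.charpoly
    rw [RingHom.map_det, RingHom.mapMatrix_apply]
    congr 1
    unfold Matrix.charmatrix
    ext i j
    rcases eq_or_ne i j with rfl | h
    · simp only [Matrix.sub_apply, Matrix.map_apply, Matrix.scalar_apply,
        Matrix.diagonal_apply_eq, RingHom.mapMatrix_apply]
      rw [map_sub]
      congr 1
      · show ψ X = t ^ 2
        rw [hψdef, RingHom.comp_apply, Polynomial.coe_eval₂RingHom, Polynomial.eval₂_X,
          htdef, map_pow]
      · show ψ (C ((xᵀ * x) i i)) = (yᵀ * y) i i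
        rw [hψdef, RingHom.comp_apply, Polynomial.coe_eval₂RingHom, Polynomial.eval₂_C]
        rw [hydef, Matrix.mul_apply, Matrix.mul_apply]
        rw [← RingHom.comp_apply, map_sum]
        refine Finset.sum_congr rfl fun a _ => ?_
        simp
    · simp only [Matrix.sub_apply, Matrix.map_apply, Matrix.scalar_apply,
        Matrix.diagonal_apply_ne _ h, RingHom.mapMatrix_apply]
      rw [map_sub]
      congr 1
      · simp
      · show ψ (C ((xᵀ * x) i j)) = (yᵀ * y) i j
        rw [hψdef, RingHom.comp_apply, Polynomial.coe_eval₂RingHom, Polynomial.eval₂_C]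
        rw [hydef, Matrix.mul_apply, Matrix.mul_apply]
        rw [← RingHom.comp_apply, map_sum]
        refine Finset.sum_congr rfl fun a _ => ?_
        simp
  rw [hR, hdetA]
  rw [show Matrix.scalar (Fin n) (t ^ 2) = t ^ 2 • (1 : Matrix (Fin n) (Fin n) K) from
    scalar_eq_smul_one _]
  ring_nf
  rw [pow_sub₀ t ht hmn]
  rw [Fintype.card_fin, inv_pow, ← mul_assoc]

end CharpolyFacts

section MultisetFacts

lemma exists_of_le_map' {α β : Type*} [DecidableEq α] [DecidableEq β] (f : α → β) :
    ∀ (t : Multiset β) (s : Multiset α), t ≤ s.map f → ∃ u, u ≤ s ∧ u.map f = t := by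
  intro t
  induction t using Multiset.induction_on with
  | empty => exact fun s _ => ⟨0, Multiset.zero_le s, rfl⟩
  | cons b t ih =>
    intro s hle
    have hb : b ∈ s.map f := Multiset.mem_of_le hle (Multiset.mem_cons_self b t)
    obtain ⟨a, ha, rfl⟩ := Multiset.mem_map.mp hb
    have hs : s.map f = f a ::ₘ (s.erase a).map f := by
      conv_lhs => rw [← Multiset.cons_erase ha]
      rw [Multiset.map_cons]
    have ht : t ≤ (s.erase a).map f := by
      rw [hs] at hle
      exact (Multiset.cons_le_cons_iff (f a)).mp hle
    obtain ⟨u, hu, hmap⟩ := ih (s.erase a) ht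
    refine ⟨a ::ₘ u, ?_, by rw [Multiset.map_cons, hmap]⟩
    calc a ::ₘ u ≤ a ::ₘ s.erase a := Multiset.cons_le_cons a hu
    _ = s := Multiset.cons_erase ha

lemma le_add_split {α : Type*} [DecidableEq α] {t a b : Multiset α} (h : t ≤ a + b) :
    ∃ u v, u ≤ a ∧ v ≤ b ∧ t = u + v := by
  refine ⟨t ∩ a, t - t ∩ a, (Multiset.inter_le_right : t ∩ a ≤ a), ?_, ?_⟩
  · rw [Multiset.le_iff_count]
    intro x
    have hc := Multiset.le_iff_count.mp h x
    rw [Multiset.count_add] at hc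
    rw [Multiset.count_sub, Multiset.count_inter]
    omega
  · exact (add_tsub_cancel_of_le ((Multiset.inter_le_left : t ∩ a ≤ t))).symm

lemma multiset_sum_nonpos {s : Multiset ℝ} (h : ∀ x ∈ s, x ≤ 0) : s.sum ≤ 0 := by
  induction s using Multiset.induction_on with
  | empty => simp
  | cons a s ih =>
    rw [Multiset.sum_cons]
    exact add_nonpos (h a (Multiset.mem_cons_self a s))
      (ih fun x hx => h x (Multiset.mem_cons_of_mem hx))

end MultisetFacts

section Eig

lemma hermitian_hat {m n : ℕ} (x : Matrix (Fin m) (Fin n) ℝ) :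
    ((Matrix.fromBlocks 0 x xᵀ 0).reindex finSumFinEquiv finSumFinEquiv).IsHermitian := by
  show _ᴴ = _
  rw [Matrix.conjTranspose_reindex]
  congr 1
  rw [Matrix.fromBlocks_conjTranspose, Matrix.conjTranspose_zero, Matrix.conjTranspose_zero,
    Matrix.conjTranspose_eq_transpose_of_trivial, Matrix.conjTranspose_eq_transpose_of_trivial,
    Matrix.transpose_transpose]

lemma eig_multiset {m n : ℕ} (hmn : n ≤ m) (x : Matrix (Fin m) (Fin n) ℝ) :
    Multiset.map (hermitian_hat x).eigenvalues Finset.univ.val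
      = (Multiset.replicate (m - n) (0 : ℝ)
          + Multiset.map (fun j => Real.sqrt
              ((Matrix.isHermitian_conjTranspose_mul_self x).eigenvalues j)) Finset.univ.val)
          + Multiset.map (fun j => -Real.sqrt
              ((Matrix.isHermitian_conjTranspose_mul_self x).eigenvalues j)) Finset.univ.val := by
  classical
  set lam : Fin n → ℝ := (Matrix.isHermitian_conjTranspose_mul_self x).eigenvalues with hlam
  set sig : Fin n → ℝ := fun j => Real.sqrt (lam j) with hsig
  have hlam_nonneg : ∀ j, 0 ≤ lam j := fun j =>
    Matrix.eigenvalues_conjTranspose_mul_self_nonneg x j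
  have hx : xᴴ = xᵀ := Matrix.conjTranspose_eq_transpose_of_trivial x
  have h4 : (xᵀ * x).charpoly = ∏ j, (X - C (lam j)) := by
    rw [← hx]
    exact charpoly_eq_prod_eigenvalues _ _
  have h1 : ((Matrix.fromBlocks 0 x xᵀ 0).reindex finSumFinEquiv
        finSumFinEquiv).charpoly = ∏ i, (X - C ((hermitian_hat x).eigenvalues i)) :=
    charpoly_eq_prod_eigenvalues _ _
  have h2 : ((Matrix.fromBlocks 0 x xᵀ 0).reindex finSumFinEquiv finSumFinEquiv).charpoly
      = X ^ (m - n) * ((xᵀ * x).charpoly).comp (X ^ 2) := by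
    rw [Matrix.charpoly_reindex]
    exact charpoly_hat hmn x
  have h5 : ((xᵀ * x).charpoly).comp (X ^ 2)
      = ∏ j, ((X - C (sig j)) * (X - C (-(sig j)))) := by
    rw [h4, Polynomial.prod_comp]
    refine Finset.prod_congr rfl fun j _ => ?_
    rw [Polynomial.sub_comp, Polynomial.X_comp, Polynomial.C_comp]
    have : (X - C (sig j)) * (X - C (-(sig j))) = X ^ 2 - C (sig j ^ 2) := by
      rw [map_neg, map_pow]
      ring
    rw [this, hsig, Real.sq_sqrt (hlam_nonneg j)]
  -- polynomial identity as multiset products of (X - C a)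
  have key : (Multiset.map (fun a : ℝ => X - C a)
        (Multiset.map (hermitian_hat x).eigenvalues Finset.univ.val)).prod
      = (Multiset.map (fun a : ℝ => X - C a)
          ((Multiset.replicate (m - n) (0 : ℝ)
            + Multiset.map sig Finset.univ.val)
            + Multiset.map (fun j => -(sig j)) Finset.univ.val)).prod := by
    rw [Multiset.map_map]
    rw [show (Multiset.map ((fun a : ℝ => X - C a) ∘ (hermitian_hat x).eigenvalues)
        Finset.univ.val).prod = ∏ i, (X - C ((hermitian_hat x).eigenvalues i)) from
      (Finset.prod_eq_multiset_prod _ _).symm]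
    rw [← h1, h2, h5]
    rw [Multiset.map_add, Multiset.map_add, Multiset.prod_add, Multiset.prod_add]
    rw [Multiset.map_replicate, Multiset.prod_replicate, map_zero, sub_zero]
    rw [Multiset.map_map, Multiset.map_map]
    rw [show (Multiset.map ((fun a : ℝ => X - C a) ∘ sig) Finset.univ.val).prod
      = ∏ j, (X - C (sig j)) from (Finset.prod_eq_multiset_prod _ _).symm]
    rw [show (Multiset.map ((fun a : ℝ => X - C a) ∘ fun j => -(sig j)) Finset.univ.val).prod
      = ∏ j, (X - C (-(sig j))) from (Finset.prod_eq_multiset_prod _ _).symm]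
    rw [mul_assoc, ← Finset.prod_mul_distrib]
  have := congrArg Polynomial.roots key
  rwa [Polynomial.roots_multiset_prod_X_sub_C, Polynomial.roots_multiset_prod_X_sub_C] at this

end Eig

section Family

lemma family_iff {m n k : ℕ} (hkn : k ≤ n)
    (μ : Fin (m + n) → ℝ) (σ : Fin n → ℝ) (hσ : ∀ j, 0 ≤ σ j)
    (hmul : Multiset.map μ Finset.univ.val
      = (Multiset.replicate (m - n) (0 : ℝ) + Multiset.map σ Finset.univ.val)
          + Multiset.map (fun j => -(σ j)) Finset.univ.val) :
    (∀ S : Finset (Fin (m + n)), S.card = k → ∑ i ∈ S, μ i ≤ 1) ↔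
      (∀ s : Finset (Fin n), s.card = k → ∑ j ∈ s, σ j ≤ 1) := by
  classical
  constructor
  · intro h s hs
    have h1 : Multiset.map σ s.val ≤ Multiset.map μ Finset.univ.val := by
      rw [hmul]
      calc Multiset.map σ s.val ≤ Multiset.map σ Finset.univ.val :=
            Multiset.map_le_map (Finset.val_le_iff.mpr (Finset.subset_univ s))
        _ ≤ Multiset.replicate (m - n) (0 : ℝ) + Multiset.map σ Finset.univ.val :=
            Multiset.le_add_left _ _
        _ ≤ _ := Multiset.le_add_right _ _
    obtain ⟨u, hu, hmap⟩ := exists_of_le_map' μ _ _ h1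
    have hnodup : u.Nodup := Multiset.nodup_of_le hu Finset.univ.nodup
    set S : Finset (Fin (m + n)) := ⟨u, hnodup⟩ with hSdef
    have hcard : S.card = k := by
      have := congrArg Multiset.card hmap
      rw [Multiset.card_map, Multiset.card_map] at this
      rw [show S.card = Multiset.card u from rfl, this, ← hs]
      rfl
    have hsum : ∑ i ∈ S, μ i = ∑ j ∈ s, σ j := by
      show (Multiset.map μ S.val).sum = (Multiset.map σ s.val).sum
      rw [show S.val = u from rfl, hmap]
    linarith [h S hcard]
  · intro h S hS
    have h1 : Multiset.map μ S.val ≤ Multiset.map σ Finset.univ.val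
        + (Multiset.replicate (m - n) (0 : ℝ)
            + Multiset.map (fun j => -(σ j)) Finset.univ.val) := by
      have h0 : Multiset.map μ S.val ≤ Multiset.map μ Finset.univ.val :=
        Multiset.map_le_map (Finset.val_le_iff.mpr (Finset.subset_univ S))
      rw [hmul] at h0
      rwa [show (Multiset.replicate (m - n) (0 : ℝ) + Multiset.map σ Finset.univ.val)
            + Multiset.map (fun j => -(σ j)) Finset.univ.val
          = Multiset.map σ Finset.univ.val + (Multiset.replicate (m - n) (0 : ℝ)
            + Multiset.map (fun j => -(σ j)) Finset.univ.val) by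
        rw [add_comm (Multiset.replicate (m - n) (0 : ℝ)) (Multiset.map σ Finset.univ.val),
          add_assoc]] at h0
    obtain ⟨u, v, hu, hv, huv⟩ := le_add_split h1
    have hsum : ∑ i ∈ S, μ i = u.sum + v.sum := by
      show (Multiset.map μ S.val).sum = u.sum + v.sum
      rw [huv, Multiset.sum_add]
    have hvsum : v.sum ≤ 0 := by
      refine multiset_sum_nonpos fun y hy => ?_
      have hyN := Multiset.mem_of_le hv hy
      rcases Multiset.mem_add.mp hyN with h0 | hneg
      · rw [Multiset.eq_of_mem_replicate h0]
      · obtain ⟨j, _, rfl⟩ := Multiset.mem_map.mp hneg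
        exact neg_nonpos.mpr (hσ j)
    obtain ⟨w, hw, hwmap⟩ := exists_of_le_map' σ _ _ hu
    have hwnodup : w.Nodup := Multiset.nodup_of_le hw Finset.univ.nodup
    set s₀ : Finset (Fin n) := ⟨w, hwnodup⟩ with hs₀def
    have hcard₀ : s₀.card ≤ k := by
      have h1c : Multiset.card u ≤ Multiset.card (Multiset.map μ S.val) := by
        rw [huv]
        exact Multiset.card_le_card (Multiset.le_add_right _ _)
      rw [Multiset.card_map] at h1c
      have h2c : s₀.card = Multiset.card u := by
        rw [show s₀.card = Multiset.card w from rfl, ← Multiset.card_map σ w, hwmap]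
      rw [h2c]
      rw [show Multiset.card S.val = S.card from rfl, hS] at h1c
      exact h1c
    obtain ⟨s, hs₀s, hscard⟩ := Finset.exists_superset_card_eq hcard₀
      (by simpa using hkn)
    have husum : u.sum = ∑ j ∈ s₀, σ j := by
      show u.sum = (Multiset.map σ s₀.val).sum
      rw [show s₀.val = w from rfl, hwmap]
    have hmono : ∑ j ∈ s₀, σ j ≤ ∑ j ∈ s, σ j :=
      Finset.sum_le_sum_of_subset_of_nonneg hs₀s (fun j _ _ => hσ j)
    have := h s hscard
    linarith

end Family

lemma kyFanNorm_le_one_iff {m n : ℕ} (k : ℕ) (hkn : k ≤ n)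
    (x : Matrix (Fin m) (Fin n) ℝ) :
    kyFanNorm k x ≤ 1 ↔ ∀ s : Finset (Fin n), s.card = k →
      ∑ i ∈ s, Real.sqrt ((Matrix.isHermitian_conjTranspose_mul_self x).eigenvalues i) ≤ 1 := by
  classical
  set f : Finset (Fin n) → ℝ :=
    fun s => ∑ i ∈ s, Real.sqrt ((Matrix.isHermitian_conjTranspose_mul_self x).eigenvalues i)
    with hfdef
  have hset : {t | ∃ s : Finset (Fin n), s.card = k ∧ t = f s}
      = f '' {s : Finset (Fin n) | s.card = k} := by
    ext t
    simp only [Set.mem_setOf_eq, Set.mem_image]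
    constructor
    · rintro ⟨s, hs, rfl⟩; exact ⟨s, hs, rfl⟩
    · rintro ⟨s, hs, rfl⟩; exact ⟨s, hs, rfl⟩
  have hne : {t | ∃ s : Finset (Fin n), s.card = k ∧ t = f s}.Nonempty := by
    obtain ⟨s, _, hs⟩ := Finset.exists_subset_card_eq (s := (Finset.univ : Finset (Fin n))) (n := k)
      (by simpa using hkn)
    exact ⟨f s, s, hs, rfl⟩
  have hbdd : BddAbove {t | ∃ s : Finset (Fin n), s.card = k ∧ t = f s} := by
    rw [hset]
    exact ((Set.toFinite _).image f).bddAbove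
  unfold kyFanNorm
  rw [csSup_le_iff hbdd hne]
  constructor
  · intro h s hs
    exact h (f s) ⟨s, hs, rfl⟩
  · rintro h t ⟨s, hs, rfl⟩
    exact h s hs


end Aux

/-- For `m ≥ n` and `1 ≤ k ≤ n`, the unit ball of the `k`-th Ky Fan norm on
`M_{m×n}(ℝ)` is the spectrahedron `{x : Λᵏ(x̂) ⪯ I}`, where
`x̂ = [[0,x],[xᵀ,0]]` and `Λᵏ` is the derivation (additive compound) action on the
`k`-th exterior power of `ℝ^{m+n}`. -/

theorem kyFan_ball_is_spectrahedron {m n : ℕ} (hmn : n ≤ m) (hn : 1 ≤ n)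
    (k : ℕ) (hk1 : 1 ≤ k) (hkn : k ≤ n) :
    {x : Matrix (Fin m) (Fin n) ℝ | kyFanNorm k x ≤ 1} =
      {x : Matrix (Fin m) (Fin n) ℝ |
        (1 - addCompound k (m + n)
          ((Matrix.fromBlocks 0 x xᵀ 0).reindex finSumFinEquiv finSumFinEquiv)).PosSemidef} := by
  ext x
  simp only [Set.mem_setOf_eq]
  rw [kyFanNorm_le_one_iff k hkn x]
  rw [one_sub_addCompound_posSemidef_iff k
    ((Matrix.fromBlocks 0 x xᵀ 0).reindex finSumFinEquiv finSumFinEquiv) (hermitian_hat x)]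
  have hiff := family_iff (m := m) (n := n) hkn (hermitian_hat x).eigenvalues
    (fun j => Real.sqrt ((Matrix.isHermitian_conjTranspose_mul_self x).eigenvalues j))
    (fun j => Real.sqrt_nonneg _) (eig_multiset hmn x)
  constructor
  · intro h S
    exact hiff.mpr h S.1 S.2
  · intro h s hs
    exact hiff.mp (fun S hS => h ⟨S, hS⟩) s hs
end
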